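/- Replacement scheme for setoids (the image of a setoid in a classoid is a setoid): let A : Type u, let B : Type (u+1) carry an equivalence relation r, and let f : A → B. Equip A with the induced equivalence relation a ≈ a' ↔ r (f a) (f a'). Then the quotient Quotient of A by ≈ (which lives in Type u) admits an injective map into the quotient of B by r, whose range is exactly the image of the composite A → B → Quotient r. -/

import Mathlib

universe u

/-- Replacement scheme for setoids: the image of a setoid in a classoid is a
setoid. Given `f : A → B` where `B : Type (u+1)` carries an equivalence
relation `r`, equip `A` with the induced relation `a ≈ a' ↔ r (f a) (f a')`
(i.e. `Setoid.comap f r`). Then the quotient of `A` (which lives in `Type u`)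
injects into the quotient of `B` with range exactly the image of the
composite `A → B → Quotient r`. -/
theorem setoid_replacement {A : Type u} {B : Type (u + 1)}
    (r : Setoid B) (f : A → B) :
    ∃ g : Quotient (Setoid.comap f r) → Quotient r,
      Function.Injective g ∧
      Set.range g = Set.range (fun a : A => Quotient.mk r (f a)) := by
  refine ⟨Quotient.lift (fun a => Quotient.mk r (f a))
    (fun a b h => Quotient.sound h), ?_, ?_⟩
  · intro x y
    refine Quotient.inductionOn₂ x y fun a b h => ?_
    exact Quotient.sound (Quotient.exact (by simpa using h : Quotient.mk r (f a) = Quotient.mk r (f b)) : f a ≈ f b)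
  · ext q
    constructor
    · rintro ⟨x, rfl⟩
      exact Quotient.inductionOn x fun a => ⟨a, rfl⟩
    · rintro ⟨a, rfl⟩
      exact ⟨Quotient.mk _ a, rfl⟩
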